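/- The subspaces Im d, ker d ∩ ker d*, and the closure of Im d* are pairwise orthogonal, and H is their internal direct sum: every x ∈ H can be written (uniquely) as x = u + v + w with u ∈ Im d, v ∈ ker d ∩ ker d*, and w in the closure of Im d*. (Hodge decomposition for the Laplacian □ = d∘d* + d*∘d.) -/

import Mathlib

open scoped InnerProductSpace

/-- **Hodge decomposition** for the Laplacian `□ = d ∘ d* + d* ∘ d` associated with a
continuous linear map `d` on a real Hilbert space with `d ∘ d = 0` and closed range:
the subspaces `Im d`, `ker d ∩ ker d*`, and the closure of `Im d*` are pairwise
orthogonal, and every `x` is uniquely the sum of elements of these three subspaces. -/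
theorem hodge_decomposition_of_closed_range
    {H : Type*} [NormedAddCommGroup H] [InnerProductSpace ℝ H] [CompleteSpace H]
    (d : H →L[ℝ] H) (hd2 : ∀ x, d (d x) = 0)
    (hclosed : IsClosed (LinearMap.range (d : H →ₗ[ℝ] H) : Set H)) :
    (∀ u ∈ LinearMap.range (d : H →ₗ[ℝ] H),
      ∀ v ∈ LinearMap.ker (d : H →ₗ[ℝ] H) ⊓ LinearMap.ker (ContinuousLinearMap.adjoint d : H →ₗ[ℝ] H),
        ⟪u, v⟫_ℝ = 0) ∧
    (∀ u ∈ LinearMap.range (d : H →ₗ[ℝ] H),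
      ∀ w ∈ (LinearMap.range (ContinuousLinearMap.adjoint d : H →ₗ[ℝ] H)).topologicalClosure,
        ⟪u, w⟫_ℝ = 0) ∧
    (∀ v ∈ LinearMap.ker (d : H →ₗ[ℝ] H) ⊓ LinearMap.ker (ContinuousLinearMap.adjoint d : H →ₗ[ℝ] H),
      ∀ w ∈ (LinearMap.range (ContinuousLinearMap.adjoint d : H →ₗ[ℝ] H)).topologicalClosure,
        ⟪v, w⟫_ℝ = 0) ∧
    (∀ x : H, ∃! uvw : H × H × H,
      uvw.1 ∈ LinearMap.range (d : H →ₗ[ℝ] H) ∧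
      uvw.2.1 ∈ LinearMap.ker (d : H →ₗ[ℝ] H) ⊓ LinearMap.ker (ContinuousLinearMap.adjoint d : H →ₗ[ℝ] H) ∧
      uvw.2.2 ∈ (LinearMap.range (ContinuousLinearMap.adjoint d : H →ₗ[ℝ] H)).topologicalClosure ∧
      x = uvw.1 + uvw.2.1 + uvw.2.2) := by
  set d' := ContinuousLinearMap.adjoint d with hd'
  set R : Submodule ℝ H := LinearMap.range (d : H →ₗ[ℝ] H) with hR
  set K : Submodule ℝ H := LinearMap.ker (d : H →ₗ[ℝ] H) ⊓ LinearMap.ker (d' : H →ₗ[ℝ] H) with hK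
  set C : Submodule ℝ H := (LinearMap.range (d' : H →ₗ[ℝ] H)).topologicalClosure with hC
  -- orthogonality 1 : R ⊥ K
  have h1 : ∀ u ∈ R, ∀ v ∈ K, ⟪u, v⟫_ℝ = 0 := by
    rintro u ⟨a, rfl⟩ v ⟨-, hv2⟩
    rw [ContinuousLinearMap.coe_coe, ← ContinuousLinearMap.adjoint_inner_right]
    rw [(show ContinuousLinearMap.adjoint d v = 0 from LinearMap.mem_ker.1 hv2), inner_zero_right]
  -- orthogonality 2 : R ⊥ C
  have h2 : ∀ u ∈ R, ∀ w ∈ C, ⟪u, w⟫_ℝ = 0 := by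
    rintro u ⟨a, rfl⟩ w hw
    have hcl : ∀ w ∈ LinearMap.range (d' : H →ₗ[ℝ] H), ⟪d a, w⟫_ℝ = 0 := by
      rintro _ ⟨b, rfl⟩
      rw [ContinuousLinearMap.coe_coe, ContinuousLinearMap.adjoint_inner_right, hd2, inner_zero_left]
    -- pass to closure
    have : w ∈ closure (LinearMap.range (d' : H →ₗ[ℝ] H) : Set H) := hw
    have hcont : Continuous fun y : H => ⟪d a, y⟫_ℝ := continuous_const.inner continuous_id
    exact (isClosed_eq hcont continuous_const).closure_subset_iff.2
      (fun y hy => hcl y hy) this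
  -- orthogonality 3 : K ⊥ C
  have h3 : ∀ v ∈ K, ∀ w ∈ C, ⟪v, w⟫_ℝ = 0 := by
    rintro v ⟨hv1, -⟩ w hw
    have hcl : ∀ w ∈ LinearMap.range (d' : H →ₗ[ℝ] H), ⟪v, w⟫_ℝ = 0 := by
      rintro _ ⟨b, rfl⟩
      rw [ContinuousLinearMap.coe_coe, ContinuousLinearMap.adjoint_inner_right, (show d v = 0 from LinearMap.mem_ker.1 hv1), inner_zero_left]
    have : w ∈ closure (LinearMap.range (d' : H →ₗ[ℝ] H) : Set H) := hw
    have hcont : Continuous fun y : H => ⟪v, y⟫_ℝ := continuous_const.inner continuous_id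
    exact (isClosed_eq hcont continuous_const).closure_subset_iff.2
      (fun y hy => hcl y hy) this
  refine ⟨h1, h2, h3, fun x => ?_⟩
  -- range d is complete
  haveI : CompleteSpace R := hclosed.completeSpace_coe
  -- decompose x = p + q with p ∈ ker d, q ∈ (ker d)ᗮ
  obtain ⟨p, hp, q, hq, hx⟩ :=
    (LinearMap.ker (d : H →ₗ[ℝ] H) : Submodule ℝ H).exists_add_mem_mem_orthogonal x
  -- q ∈ C : since Cᗮ ⊆ ker d
  have hCker : Cᗮ ≤ LinearMap.ker (d : H →ₗ[ℝ] H) := by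
    intro y hy
    have h0 : ∀ b : H, ⟪y, d' b⟫_ℝ = 0 := fun b =>
      inner_eq_zero_symm.1 (hy _ ((LinearMap.range (d' : H →ₗ[ℝ] H)).le_topologicalClosure ⟨b, rfl⟩))
    have : ⟪d y, d y⟫_ℝ = 0 := by
      rw [← ContinuousLinearMap.adjoint_inner_right] at *
      exact h0 (d y)
    simpa [LinearMap.mem_ker] using inner_self_eq_zero.1 this
  have hqC : q ∈ C := by
    have : (LinearMap.ker (d : H →ₗ[ℝ] H) : Submodule ℝ H)ᗮ ≤ Cᗮᗮ := Submodule.orthogonal_le hCker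
    have h2' : Cᗮᗮ = C := Submodule.orthogonal_orthogonal C
    exact h2' ▸ this hq
  -- decompose p = u + v with u ∈ R, v ∈ Rᗮ
  obtain ⟨u, hu, v, hv, hp'⟩ := R.exists_add_mem_mem_orthogonal p
  -- v ∈ K
  have hRker : R ≤ LinearMap.ker (d : H →ₗ[ℝ] H) := by
    rintro _ ⟨a, rfl⟩; simpa [LinearMap.mem_ker] using hd2 a
  have hvK : v ∈ K := by
    constructor
    · have : v = p - u := by rw [hp']; abel
      rw [this]
      exact Submodule.sub_mem _ hp (hRker hu)
    · have h0 : ⟪d' v, d' v⟫_ℝ = 0 := by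
        rw [ContinuousLinearMap.adjoint_inner_right]
        exact hv _ ⟨d' v, rfl⟩
      simpa [LinearMap.mem_ker] using inner_self_eq_zero.1 h0
  refine ⟨(u, v, q), ⟨hu, hvK, hqC, by rw [hx, hp']⟩, ?_⟩
  -- uniqueness
  rintro ⟨u', v', w'⟩ ⟨hu', hv', hw', hxeq⟩
  have hsum : (u' - u) + (v' - v) + (w' - q) = 0 := by
    have heq : u' + v' + w' = u + v + q := by rw [← hxeq, hx, hp']
    have : (u' - u) + (v' - v) + (w' - q) = (u' + v' + w') - (u + v + q) := by abel
    rw [this, heq, sub_self]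
  have hdu : u' - u ∈ R := Submodule.sub_mem _ hu' hu
  have hdv : v' - v ∈ K := Submodule.sub_mem _ hv' hvK
  have hdw : w' - q ∈ C := Submodule.sub_mem _ hw' hqC
  have key : ∀ a b c : H, a ∈ R → b ∈ K → c ∈ C → a + b + c = 0 →
      a = 0 ∧ b = 0 ∧ c = 0 := by
    intro a b c ha hb hc habc
    have ha0 : ⟪a, a⟫_ℝ = 0 := by
      have : ⟪a, a + b + c⟫_ℝ = 0 := by rw [habc, inner_zero_right]
      rwa [inner_add_right, inner_add_right, h1 a ha b hb, h2 a ha c hc,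
        add_zero, add_zero] at this
    have ha' : a = 0 := inner_self_eq_zero.1 ha0
    have hb0 : ⟪b, b⟫_ℝ = 0 := by
      have : ⟪b, a + b + c⟫_ℝ = 0 := by rw [habc, inner_zero_right]
      rwa [inner_add_right, inner_add_right, inner_eq_zero_symm.1 (h1 a ha b hb),
        h3 b hb c hc, zero_add, add_zero] at this
    have hb' : b = 0 := inner_self_eq_zero.1 hb0
    have hc' : c = 0 := by
      have := habc; rw [ha', hb'] at this; simpa using this
    exact ⟨ha', hb', hc'⟩
  obtain ⟨e1, e2, e3⟩ := key _ _ _ hdu hdv hdw hsum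
  have g1 : u' = u := sub_eq_zero.1 e1
  have g2 : v' = v := sub_eq_zero.1 e2
  have g3 : w' = q := sub_eq_zero.1 e3
  simp [g1, g2, g3, Prod.ext_iff]
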